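/- Let X ~ Bin(n, p) with mean μ = np. If 0 < k < n and k ≥ e²μ, then P(X ≥ k) ≤ exp(-(k/2) log(k/μ)). -/

import Mathlib

open Finset

/-- The probability that a `Bin(m,p)` random variable equals `i`. -/
noncomputable def binomialP (m : ℕ) (p : ℝ) (i : ℕ) : ℝ :=
  (m.choose i : ℝ) * p ^ i * (1 - p) ^ (m - i)

/-- `P(Bin(m,p) ≥ k)`. -/
noncomputable def binomTail (m : ℕ) (p : ℝ) (k : ℕ) : ℝ :=
  ∑ i ∈ Finset.Icc k m, binomialP m p i

/-- Union bound: `P(Bin(n,p) ≥ k) ≤ C(n,k) p^k`. -/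
lemma binomTail_le_choose_mul_pow (n k : ℕ) (p : ℝ) (hp : 0 ≤ p) (hp1 : p ≤ 1)
    (hkn : k ≤ n) :
    binomTail n p k ≤ (n.choose k : ℝ) * p ^ k := by
  have hq : (0:ℝ) ≤ 1 - p := by linarith
  unfold binomTail binomialP
  rw [← Finset.Ico_add_one_right_eq_Icc, Finset.sum_Ico_eq_sum_range]
  have hsum1 : ∑ j ∈ Finset.range (n + 1 - k),
      (((n - k).choose j : ℝ) * p ^ j * (1 - p) ^ (n - k - j)) = 1 := by
    have hrange : n + 1 - k = (n - k) + 1 := by omega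
    rw [hrange]
    have h := add_pow p (1 - p) (n - k)
    have h1 : (p + (1 - p)) ^ (n - k) = 1 := by norm_num
    rw [h1] at h
    calc ∑ j ∈ Finset.range (n - k + 1),
          (((n - k).choose j : ℝ) * p ^ j * (1 - p) ^ (n - k - j))
        = ∑ m ∈ Finset.range (n - k + 1),
            (p ^ m * (1 - p) ^ (n - k - m) * ((n - k).choose m : ℝ)) := by
          exact Finset.sum_congr rfl fun j _ => by ring
      _ = 1 := h.symm
  calc ∑ j ∈ Finset.range (n + 1 - k),
        ((n.choose (k + j) : ℝ) * p ^ (k + j) * (1 - p) ^ (n - (k + j)))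
      ≤ ∑ j ∈ Finset.range (n + 1 - k),
        ((n.choose k : ℝ) * p ^ k *
          (((n - k).choose j : ℝ) * p ^ j * (1 - p) ^ (n - k - j))) := by
        apply Finset.sum_le_sum
        intro j hj
        have hjn : k + j ≤ n := by
          simp only [Finset.mem_range] at hj; omega
        have hchoose : n.choose (k + j) ≤ n.choose k * (n - k).choose j := by
          have hid := Nat.choose_mul (n := n) (Nat.le_add_right k j)
          have hpos : 1 ≤ (k + j).choose k := Nat.choose_pos (Nat.le_add_right k j)
          calc n.choose (k + j) = n.choose (k + j) * 1 := by ring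
            _ ≤ n.choose (k + j) * (k + j).choose k := by
                exact Nat.mul_le_mul_left _ hpos
            _ = n.choose k * (n - k).choose ((k + j) - k) := hid
            _ = n.choose k * (n - k).choose j := by
                congr 1; congr 1; omega
        have hcast : ((n.choose (k + j) : ℝ)) ≤ (n.choose k : ℝ) * ((n - k).choose j : ℝ) := by
          exact_mod_cast hchoose
        have hsub : n - (k + j) = n - k - j := by omega
        calc ((n.choose (k + j) : ℝ) * p ^ (k + j) * (1 - p) ^ (n - (k + j)))
            ≤ ((n.choose k : ℝ) * ((n - k).choose j : ℝ)) * p ^ (k + j)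
                * (1 - p) ^ (n - (k + j)) := by
              apply mul_le_mul_of_nonneg_right _ (pow_nonneg hq _)
              exact mul_le_mul_of_nonneg_right hcast (pow_nonneg hp _)
          _ = (n.choose k : ℝ) * p ^ k *
                (((n - k).choose j : ℝ) * p ^ j * (1 - p) ^ (n - k - j)) := by
              rw [hsub, pow_add]; ring
    _ = (n.choose k : ℝ) * p ^ k := by
        rw [← Finset.mul_sum, hsum1, mul_one]

theorem stmt_7 (n k : ℕ) (p : ℝ) (hp : 0 < p) (hp1 : p < 1)
    (hk0 : 0 < k) (hkn : k < n)
    (hkμ : Real.exp 2 * ((n : ℝ) * p) ≤ k) :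
    binomTail n p k ≤
      Real.exp (-(((k : ℝ) / 2) * Real.log ((k : ℝ) / ((n : ℝ) * p)))) := by
  set μ : ℝ := (n : ℝ) * p with hμdef
  have hn0 : (0:ℝ) < n := by exact_mod_cast (show 0 < n by omega)
  have hμ0 : (0:ℝ) < μ := by positivity
  have hk0' : (0:ℝ) < k := by exact_mod_cast hk0
  -- L = log(k/μ) ≥ 2
  set L : ℝ := Real.log ((k : ℝ) / μ) with hLdef
  have hratio : Real.exp 2 ≤ (k : ℝ) / μ := by
    rw [le_div_iff₀ hμ0]; linarith [hkμ]
  have hL2 : 2 ≤ L := by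
    have := Real.log_le_log (Real.exp_pos 2) hratio
    rwa [Real.log_exp] at this
  -- Step 1: tail ≤ C(n,k) p^k
  have h1 : binomTail n p k ≤ (n.choose k : ℝ) * p ^ k :=
    binomTail_le_choose_mul_pow n k p hp.le hp1.le hkn.le
  -- Step 2: C(n,k) p^k ≤ exp k * (μ/k)^k
  have hfact : (0:ℝ) < (Nat.factorial k : ℝ) := by positivity
  have h2 : (n.choose k : ℝ) * p ^ k ≤ Real.exp k * (μ / k) ^ k := by
    have hc : (n.choose k : ℝ) ≤ (n:ℝ) ^ k / (Nat.factorial k : ℝ) := by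
      have := Nat.choose_le_pow_div (α := ℝ) k n
      simpa using this
    have hkk : ((k:ℝ)) ^ k / (Nat.factorial k : ℝ) ≤ Real.exp k :=
      Real.pow_div_factorial_le_exp (x := (k:ℝ)) (le_of_lt hk0') k
    have hμk : (n:ℝ) ^ k * p ^ k = μ ^ k := by rw [hμdef, mul_pow]
    calc (n.choose k : ℝ) * p ^ k
        ≤ ((n:ℝ) ^ k / (Nat.factorial k : ℝ)) * p ^ k := by
          exact mul_le_mul_of_nonneg_right hc (pow_nonneg hp.le _)
      _ = μ ^ k / (Nat.factorial k : ℝ) := by rw [div_mul_eq_mul_div, hμk]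
      _ = ((k:ℝ) ^ k / (Nat.factorial k : ℝ)) * (μ / k) ^ k := by
          rw [div_pow]
          field_simp
      _ ≤ Real.exp k * (μ / k) ^ k := by
          exact mul_le_mul_of_nonneg_right hkk (by positivity)
  -- Step 3: exp k * (μ/k)^k = exp (k - k*L) ≤ exp (-(k/2)*L)
  have hμk0 : (0:ℝ) < μ / k := by positivity
  have h3 : Real.exp k * (μ / k) ^ k = Real.exp ((k:ℝ) - (k:ℝ) * L) := by
    have hpow : (μ / k) ^ k = Real.exp ((k:ℝ) * Real.log (μ / k)) := by
      rw [← Real.log_pow, Real.exp_log (by positivity)]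
    have hloginv : Real.log (μ / k) = -L := by
      rw [hLdef, ← Real.log_inv]
      congr 1
      field_simp
    rw [hpow, hloginv, ← Real.exp_add]
    ring_nf
  have h4 : Real.exp ((k:ℝ) - (k:ℝ) * L) ≤ Real.exp (-(((k:ℝ) / 2) * L)) := by
    apply Real.exp_le_exp.mpr
    nlinarith [hk0', hL2]
  calc binomTail n p k ≤ (n.choose k : ℝ) * p ^ k := h1
    _ ≤ Real.exp k * (μ / k) ^ k := h2
    _ = Real.exp ((k:ℝ) - (k:ℝ) * L) := h3
    _ ≤ Real.exp (-(((k:ℝ) / 2) * L)) := h4
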